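/- For ε > 0, ε_g ∈ ℝ, and any t ∈ [0, ε], the inequality q_{ε,(ε_g−t)/2}²·(1 − e^{−ε}) ≥ 1 − e^{ε_g − ε − t} holds whenever (ε_g − t)/2 ∈ [0, ε], with equality if and only if t = ε_g. Equivalently, (1 − e^{(ε_g−t)/2 − ε})²/(1 − e^{−ε}) − (1 − e^{ε_g − ε − t}) = (1 − e^{(ε_g−t)/2})²·e^{−ε}/(1 − e^{−ε}) ≥ 0. -/

import Mathlib

open Real

noncomputable def qT (ε t : ℝ) : ℝ := (1 - exp (t - ε)) / (1 - exp (-ε))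

theorem stmt_15 (ε εg t : ℝ) (hε : 0 < ε) (ht : t ∈ Set.Icc 0 ε)
    (hmid : (εg - t) / 2 ∈ Set.Icc 0 ε) :
    (1 - exp (εg - ε - t) ≤ qT ε ((εg - t) / 2) ^ 2 * (1 - exp (-ε))) ∧
    (qT ε ((εg - t) / 2) ^ 2 * (1 - exp (-ε)) = 1 - exp (εg - ε - t) ↔ t = εg) ∧
    ((1 - exp ((εg - t) / 2 - ε)) ^ 2 / (1 - exp (-ε)) - (1 - exp (εg - ε - t))
      = (1 - exp ((εg - t) / 2)) ^ 2 * exp (-ε) / (1 - exp (-ε))) := by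
  set s := (εg - t) / 2 with hs
  have hb : exp (-ε) < 1 := exp_lt_one_iff.mpr (by linarith)
  have hD : 0 < 1 - exp (-ε) := by linarith
  have hsε' : exp (s - ε) = exp s * exp (-ε) := by
    rw [← exp_add]; ring_nf
  have h2sε : exp (εg - ε - t) = exp s ^ 2 * exp (-ε) := by
    have : εg - ε - t = s + (s + -ε) := by rw [hs]; ring
    rw [this, exp_add, exp_add]; ring
  have key : (1 - exp (s - ε)) ^ 2 / (1 - exp (-ε)) - (1 - exp (εg - ε - t))
      = (1 - exp s) ^ 2 * exp (-ε) / (1 - exp (-ε)) := by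
    rw [hsε', h2sε]; field_simp; ring
  have hq : qT ε s ^ 2 * (1 - exp (-ε)) = (1 - exp (s - ε)) ^ 2 / (1 - exp (-ε)) := by
    unfold qT; field_simp
  have hnn : 0 ≤ (1 - exp s) ^ 2 * exp (-ε) / (1 - exp (-ε)) :=
    div_nonneg (mul_nonneg (sq_nonneg _) (exp_pos _).le) hD.le
  refine ⟨by rw [hq]; linarith [key], ?_, key⟩
  rw [hq]
  constructor
  · intro h
    have h0 : (1 - exp s) ^ 2 * exp (-ε) / (1 - exp (-ε)) = 0 := by linarith [key]
    have h1 : (1 - exp s) ^ 2 * exp (-ε) = 0 := by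
      field_simp at h0; rw [mul_zero] at h0; exact h0
    have h2 : exp s = 1 := by
      rcases mul_eq_zero.mp h1 with h' | h'
      · have := pow_eq_zero_iff (n := 2) (by norm_num) |>.mp h'
        linarith
      · exact absurd h' (exp_pos _).ne'
    have h3 : s = 0 := by
      have : exp s = exp 0 := by rw [h2, exp_zero]
      exact exp_eq_exp.mp this
    rw [hs] at h3; linarith
  · intro h
    have h3 : s = 0 := by rw [hs, h]; ring
    have h2 : exp s = 1 := by rw [h3, exp_zero]
    rw [h2] at key; simp at key; linarith [key]
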